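/- Consider the simple energy sharing game with producers U_1, consumers U_2, |U_1| ≥ 2 and |U_2| ≥ 2, capacities p_i > 0 (i ∈ U_1), q_j > 0 (j ∈ U_2), zero admission fees, and characteristic function v(S) = min( Σ_{i∈S∩U_1} p_i, Σ_{j∈S∩U_2} q_j ) for proper coalitions S containing the aggregator a with |S∩U| ≥ 2, and v(S)=0 otherwise. If Σ_{j∈U_2} q_j < Σ_{i∈U_1} p_i, then the game is a big-boss game with big boss a if and only if Σ_{j∈U_2} q_j ≤ Σ_{i∈U_1\{k}} p_i for every k ∈ U_1. -/

import Mathlib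

open Finset

/-- In the simple energy sharing game with zero admission fees, producers `U₁`,
consumers `U₂` (each with at least two members), if `Σ q < Σ p`, then the
big-boss condition for `a` (`v(N) − v(S) ≥ Σ_{i∈N\S} (v(N) − v(N\{i}))` for all
`S ∋ a`) holds if and only if `Σ_{j∈U₂} q_j ≤ Σ_{i∈U₁\{k}} p_i` for every `k ∈ U₁`. -/
theorem stmt16 {ι : Type*} [Fintype ι] [DecidableEq ι]
    (U1 U2 : Finset ι) (a : ι) (p q : ι → ℝ) (v : Finset ι → ℝ)
    (hdisj : Disjoint U1 U2) (haU : a ∉ U1 ∪ U2)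
    (hunion : Finset.univ = insert a (U1 ∪ U2))
    (hU1 : 2 ≤ U1.card) (hU2 : 2 ≤ U2.card)
    (hp : ∀ i ∈ U1, 0 < p i) (hq : ∀ j ∈ U2, 0 < q j)
    (hv : ∀ S : Finset ι,
      v S = if a ∈ S ∧ 2 ≤ (S ∩ (U1 ∪ U2)).card
        then min (∑ i ∈ S ∩ U1, p i) (∑ j ∈ S ∩ U2, q j) else 0)
    (hlt : ∑ j ∈ U2, q j < ∑ i ∈ U1, p i) :
    (∀ S : Finset ι, a ∈ S →
        (∑ i ∈ Finset.univ \ S, (v Finset.univ - v (Finset.univ.erase i))) ≤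
          v Finset.univ - v S)
      ↔ ∀ k ∈ U1, ∑ j ∈ U2, q j ≤ ∑ i ∈ U1.erase k, p i := by
  have haU1 : a ∉ U1 := fun h => haU (mem_union_left _ h)
  have haU2 : a ∉ U2 := fun h => haU (mem_union_right _ h)
  have hd12 : ∀ x ∈ U1, x ∉ U2 := fun x hx => disjoint_left.mp hdisj hx
  have hd21 : ∀ x ∈ U2, x ∉ U1 := fun x hx => disjoint_right.mp hdisj hx
  have hcard12 : 4 ≤ (U1 ∪ U2).card := by
    rw [card_union_of_disjoint hdisj]; omega
  have hvN : v Finset.univ = ∑ j ∈ U2, q j := by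
    rw [hv, if_pos ⟨mem_univ a, by rw [univ_inter]; omega⟩, univ_inter, univ_inter]
    exact min_eq_right hlt.le
  -- values at N \ {k} for k ∈ U1
  have hv1 : ∀ k ∈ U1, v (Finset.univ.erase k)
      = min (∑ i ∈ U1.erase k, p i) (∑ j ∈ U2, q j) := by
    intro k hk
    have h1 : Finset.univ.erase k ∩ U1 = U1.erase k := by
      ext x; simp [mem_erase, and_comm]
    have h2 : Finset.univ.erase k ∩ U2 = U2 := by
      ext x; simp only [mem_inter, mem_erase, mem_univ, and_true]
      exact ⟨fun h => h.2, fun h => ⟨fun e => hd21 x h (e ▸ hk), h⟩⟩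
    have h3 : Finset.univ.erase k ∩ (U1 ∪ U2) = (U1 ∪ U2).erase k := by
      ext x; simp [mem_erase, and_comm]
    have ha : a ∈ Finset.univ.erase k :=
      mem_erase.mpr ⟨fun h => haU1 (h ▸ hk), mem_univ a⟩
    have hc : 2 ≤ (Finset.univ.erase k ∩ (U1 ∪ U2)).card := by
      rw [h3, card_erase_of_mem (mem_union_left _ hk)]; omega
    rw [hv, if_pos ⟨ha, hc⟩, h1, h2]
  -- values at N \ {j} for j ∈ U2
  have hv2 : ∀ j ∈ U2, v (Finset.univ.erase j) = (∑ j ∈ U2, q j) - q j := by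
    intro j hj
    have h1 : Finset.univ.erase j ∩ U1 = U1 := by
      ext x; simp only [mem_inter, mem_erase, mem_univ, and_true]
      exact ⟨fun h => h.2, fun h => ⟨fun e => hd12 x h (e ▸ hj), h⟩⟩
    have h2 : Finset.univ.erase j ∩ U2 = U2.erase j := by
      ext x; simp [mem_erase, and_comm]
    have h3 : Finset.univ.erase j ∩ (U1 ∪ U2) = (U1 ∪ U2).erase j := by
      ext x; simp [mem_erase, and_comm]
    have ha : a ∈ Finset.univ.erase j :=
      mem_erase.mpr ⟨fun h => haU2 (h ▸ hj), mem_univ a⟩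
    have hc : 2 ≤ (Finset.univ.erase j ∩ (U1 ∪ U2)).card := by
      rw [h3, card_erase_of_mem (mem_union_right _ hj)]; omega
    have hsum : ∑ x ∈ U2.erase j, q x = (∑ j ∈ U2, q j) - q j := by
      rw [eq_sub_iff_add_eq, sum_erase_add _ _ hj]
    rw [hv, if_pos ⟨ha, hc⟩, h1, h2, hsum]
    refine min_eq_right ?_
    have := (hq j hj).le
    linarith
  constructor
  · -- big boss ⇒ condition
    intro H k hk
    by_contra hcon
    push_neg at hcon
    obtain ⟨j, hj⟩ := card_pos.mp (lt_of_lt_of_le (by norm_num) hU2)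
    have hkj : k ≠ j := fun e => hd12 k hk (e ▸ hj)
    set S := (Finset.univ.erase k).erase j with hS
    have haS : a ∈ S := by
      refine mem_erase.mpr ⟨fun h => haU2 (h ▸ hj), mem_erase.mpr ⟨fun h => haU1 (h ▸ hk), mem_univ a⟩⟩
    have hSU1 : S ∩ U1 = U1.erase k := by
      ext x
      simp only [hS, mem_inter, mem_erase, mem_univ, and_true]
      constructor
      · rintro ⟨⟨hxj, hxk⟩, hx⟩; exact ⟨hxk, hx⟩
      · rintro ⟨hxk, hx⟩; exact ⟨⟨fun e => hd12 x hx (e ▸ hj), hxk⟩, hx⟩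
    have hSU2 : S ∩ U2 = U2.erase j := by
      ext x
      simp only [hS, mem_inter, mem_erase, mem_univ, and_true]
      constructor
      · rintro ⟨⟨hxj, hxk⟩, hx⟩; exact ⟨hxj, hx⟩
      · rintro ⟨hxj, hx⟩; exact ⟨⟨hxj, fun e => hd21 x hx (e ▸ hk)⟩, hx⟩
    have hSU : S ∩ (U1 ∪ U2) = ((U1 ∪ U2).erase k).erase j := by
      ext x; simp only [hS, mem_inter, mem_erase, mem_univ, and_true, mem_union]; tauto
    have hcS : 2 ≤ (S ∩ (U1 ∪ U2)).card := by
      rw [hSU, card_erase_of_mem (mem_erase.mpr ⟨(fun e => hd21 j hj (e ▸ hk) : j ≠ k), mem_union_right _ hj⟩),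
        card_erase_of_mem (mem_union_left _ hk)]
      omega
    have hcompl : Finset.univ \ S = {k, j} := by
      ext x
      simp only [hS, mem_sdiff, mem_univ, true_and, mem_erase, mem_insert, mem_singleton]
      tauto
    have hvS : v S = min (∑ i ∈ U1.erase k, p i) ((∑ j ∈ U2, q j) - q j) := by
      have hsum : ∑ x ∈ U2.erase j, q x = (∑ j ∈ U2, q j) - q j := by
        rw [eq_sub_iff_add_eq, sum_erase_add _ _ hj]
      rw [hv, if_pos ⟨haS, hcS⟩, hSU1, hSU2, hsum]
    have hvk : v (Finset.univ.erase k) = ∑ i ∈ U1.erase k, p i := by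
      rw [hv1 k hk]; exact min_eq_left hcon.le
    have H' := H S haS
    rw [hcompl, sum_pair hkj, hvN, hvk, hv2 j hj, hvS] at H'
    have hqj := hq j hj
    rcases min_le_iff.mp (le_refl (min (∑ i ∈ U1.erase k, p i) ((∑ j ∈ U2, q j) - q j))) with h | h
    · rcases le_or_gt (∑ i ∈ U1.erase k, p i) ((∑ j ∈ U2, q j) - q j) with hmin | hmin
      · rw [min_eq_left hmin] at H'; linarith
      · rw [min_eq_right hmin.le] at H'; linarith
    · rcases le_or_gt (∑ i ∈ U1.erase k, p i) ((∑ j ∈ U2, q j) - q j) with hmin | hmin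
      · rw [min_eq_left hmin] at H'; linarith
      · rw [min_eq_right hmin.le] at H'; linarith
  · -- condition ⇒ big boss
    intro H S haS
    have hsplit : Finset.univ \ S = (U1 \ S) ∪ (U2 \ S) := by
      ext x
      simp only [mem_sdiff, mem_univ, true_and, mem_union]
      constructor
      · intro hx
        have : x ∈ insert a (U1 ∪ U2) := hunion ▸ mem_univ x
        rcases mem_insert.mp this with rfl | h
        · exact absurd haS hx
        · rcases mem_union.mp h with h | h
          · exact Or.inl ⟨h, hx⟩
          · exact Or.inr ⟨h, hx⟩
      · rintro (⟨_, hx⟩ | ⟨_, hx⟩) <;> exact hx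
    have hdsd : Disjoint (U1 \ S) (U2 \ S) :=
      (hdisj.mono (sdiff_subset) (sdiff_subset))
    rw [hsplit, sum_union hdsd]
    have h1 : ∑ i ∈ U1 \ S, (v Finset.univ - v (Finset.univ.erase i)) = 0 := by
      refine sum_eq_zero fun i hi => ?_
      have hiU1 : i ∈ U1 := (mem_sdiff.mp hi).1
      rw [hvN, hv1 i hiU1, min_eq_right (H i hiU1), sub_self]
    have h2 : ∑ i ∈ U2 \ S, (v Finset.univ - v (Finset.univ.erase i)) = ∑ i ∈ U2 \ S, q i := by
      refine sum_congr rfl fun i hi => ?_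
      have hiU2 : i ∈ U2 := (mem_sdiff.mp hi).1
      rw [hvN, hv2 i hiU2]; ring
    rw [h1, h2, zero_add, hvN]
    have hvS : v S ≤ ∑ j ∈ S ∩ U2, q j := by
      rw [hv]
      split_ifs with h
      · exact min_le_right _ _
      · exact sum_nonneg fun j hj => (hq j (mem_inter.mp hj).2).le
    have hpart : ∑ j ∈ S ∩ U2, q j + ∑ i ∈ U2 \ S, q i = ∑ j ∈ U2, q j := by
      rw [inter_comm, sum_inter_add_sum_sdiff]
    linarith
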